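/- (Lemma B.2, CARA case) Let y₀ > y₁ > y₂ > y₃ > 0 be real numbers. The function M : ℝ → ℝ defined by M(ν) = (exp(−ν y₃) − exp(−ν y₂)) / (exp(−ν y₁) − exp(−ν y₀)) for ν ≠ 0 and M(0) = (y₂ − y₃)/(y₀ − y₁) is strictly increasing on ℝ. -/
import Mathlib

open Real intervalIntegral

private lemma exp_int (ν a b : ℝ) (hν : ν ≠ 0) :
    ∫ t in a..b, Real.exp (-ν * t) = (Real.exp (-ν * a) - Real.exp (-ν * b)) / ν := by
  have h := intervalIntegral.integral_comp_mul_left (a := a) (b := b)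
    (fun x => Real.exp x) (c := -ν) (by simpa using hν)
  rw [h, integral_exp, smul_eq_mul, inv_neg, div_eq_inv_mul]
  ring

/-- Lemma B.2 (CARA case): for wealth levels `y₀ > y₁ > y₂ > y₃ > 0`, the CARA
utility-difference ratio `(u_ν(y₂) − u_ν(y₃)) / (u_ν(y₀) − u_ν(y₁))`, extended by
continuity at `ν = 0`, is strictly increasing in the risk-aversion parameter `ν`. -/
theorem cara_ratio_extended_strictMono (y₀ y₁ y₂ y₃ : ℝ) (h01 : y₀ > y₁)
    (h12 : y₁ > y₂) (h23 : y₂ > y₃) (h3 : y₃ > 0) (M : ℝ → ℝ)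
    (hM : ∀ ν : ℝ, ν ≠ 0 →
      M ν = (Real.exp (-ν * y₃) - Real.exp (-ν * y₂)) /
        (Real.exp (-ν * y₁) - Real.exp (-ν * y₀)))
    (hM0 : M 0 = (y₂ - y₃) / (y₀ - y₁)) :
    StrictMono M := by
  set F : ℝ → ℝ := fun ν => ∫ t in y₃..y₂, Real.exp (-ν * t) with hF
  set G : ℝ → ℝ := fun ν => ∫ t in y₁..y₀, Real.exp (-ν * t) with hG
  have hcont : ∀ ν : ℝ, Continuous (fun t : ℝ => Real.exp (-ν * t)) := by
    intro ν; fun_prop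
  have hGpos : ∀ ν : ℝ, 0 < G ν := by
    intro ν
    exact intervalIntegral.intervalIntegral_pos_of_pos_on
      ((hcont ν).intervalIntegrable _ _) (fun x _ => Real.exp_pos _) h01
  have hFpos : ∀ ν : ℝ, 0 < F ν := by
    intro ν
    exact intervalIntegral.intervalIntegral_pos_of_pos_on
      ((hcont ν).intervalIntegrable _ _) (fun x _ => Real.exp_pos _) h23
  have hMeq : ∀ ν : ℝ, M ν = F ν / G ν := by
    intro ν
    rcases eq_or_ne ν 0 with rfl | hν
    · simp only [hF, hG, neg_zero, zero_mul, Real.exp_zero]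
      rw [hM0, intervalIntegral.integral_const, intervalIntegral.integral_const]
      simp
    · have hFv : F ν = (Real.exp (-ν * y₃) - Real.exp (-ν * y₂)) / ν := exp_int ν y₃ y₂ hν
      have hGv : G ν = (Real.exp (-ν * y₁) - Real.exp (-ν * y₀)) / ν := exp_int ν y₁ y₀ hν
      rw [hM ν hν, hFv, hGv]
      have hden : (Real.exp (-ν * y₁) - Real.exp (-ν * y₀)) / ν ≠ 0 := by
        have := hGpos ν
        rw [hGv] at this
        exact ne_of_gt this
      have hB : Real.exp (-ν * y₁) - Real.exp (-ν * y₀) ≠ 0 := by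
        intro h; rw [h] at hden; simp at hden
      field_simp
  intro μ ν hlt
  rw [hMeq, hMeq, div_lt_div_iff₀ (hGpos μ) (hGpos ν)]
  -- pointwise key inequality
  have key : ∀ t : ℝ, t ≤ y₂ → Real.exp (-μ * t) * G ν < Real.exp (-ν * t) * G μ := by
    intro t ht
    have h1 : Real.exp (-μ * t) * G ν = ∫ s in y₁..y₀, Real.exp (-μ * t) * Real.exp (-ν * s) := by
      rw [hG, intervalIntegral.integral_const_mul]
    have h2 : Real.exp (-ν * t) * G μ = ∫ s in y₁..y₀, Real.exp (-ν * t) * Real.exp (-μ * s) := by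
      rw [hG, intervalIntegral.integral_const_mul]
    rw [h1, h2]
    have hint1 : IntervalIntegrable (fun s => Real.exp (-μ * t) * Real.exp (-ν * s))
        MeasureTheory.volume y₁ y₀ := by
      exact (Continuous.intervalIntegrable (by fun_prop) _ _)
    have hint2 : IntervalIntegrable (fun s => Real.exp (-ν * t) * Real.exp (-μ * s))
        MeasureTheory.volume y₁ y₀ := by
      exact (Continuous.intervalIntegrable (by fun_prop) _ _)
    have hpos : 0 < ∫ s in y₁..y₀,
        (Real.exp (-ν * t) * Real.exp (-μ * s) - Real.exp (-μ * t) * Real.exp (-ν * s)) := by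
      apply intervalIntegral.intervalIntegral_pos_of_pos_on
        (Continuous.intervalIntegrable (by fun_prop) _ _) _ h01
      intro s hs
      have hts : t < s := lt_of_le_of_lt ht (lt_trans h12 hs.1)
      have : Real.exp (-μ * t + -ν * s) < Real.exp (-ν * t + -μ * s) := by
        apply Real.exp_lt_exp.2
        nlinarith [hlt, hts]
      rw [Real.exp_add, Real.exp_add] at this
      linarith
    rw [intervalIntegral.integral_sub hint2 hint1] at hpos
    linarith
  -- integrate over t in y₃..y₂
  have hL : F μ * G ν = ∫ t in y₃..y₂, Real.exp (-μ * t) * G ν := by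
    rw [hF, intervalIntegral.integral_mul_const]
  have hR : F ν * G μ = ∫ t in y₃..y₂, Real.exp (-ν * t) * G μ := by
    rw [hF, intervalIntegral.integral_mul_const]
  rw [hL, hR]
  have hint1 : IntervalIntegrable (fun t => Real.exp (-μ * t) * G ν)
      MeasureTheory.volume y₃ y₂ := Continuous.intervalIntegrable (by fun_prop) _ _
  have hint2 : IntervalIntegrable (fun t => Real.exp (-ν * t) * G μ)
      MeasureTheory.volume y₃ y₂ := Continuous.intervalIntegrable (by fun_prop) _ _
  have hpos : 0 < ∫ t in y₃..y₂,
      (Real.exp (-ν * t) * G μ - Real.exp (-μ * t) * G ν) := by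
    apply intervalIntegral.intervalIntegral_pos_of_pos_on
      (Continuous.intervalIntegrable (by fun_prop) _ _) _ h23
    intro t ht
    have := key t (le_of_lt ht.2)
    linarith
  rw [intervalIntegral.integral_sub hint2 hint1] at hpos
  linarith
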